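/- Let n ≥ 1. There exists a constant C ≥ 1 such that for every ball B = B(c_B, r_B) ⊂ ℝ^n (center c_B ∈ ℝ^n, radius r_B > 0), C^{-1} · |B|/(log(e + 1/|B|) + sup_{x ∈ B} log(e+|x|)) ≤ ‖χ_B‖_{L^{Φ_1}} ≤ C · |B|/(log(e + 1/|B|) + sup_{x ∈ B} log(e+|x|)), and moreover C^{-1} · |B|/(|log r_B| + log(e+|c_B|)) ≤ ‖χ_B‖_{L^{Φ_1}} ≤ C · |B|/(|log r_B| + log(e+|c_B|)), where |B| denotes the Lebesgue measure of B. -/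

import Mathlib

open MeasureTheory Real
open scoped ENNReal Classical

set_option maxHeartbeats 1000000
noncomputable section

/-- `ℝⁿ` as a Euclidean space. -/
abbrev Rn (n : ℕ) := EuclideanSpace ℝ (Fin n)

/-- The Musielak-Orlicz growth function `Φ_p`. -/
def Phi (n : ℕ) (p : ℝ) (x : Rn n) (t : ℝ) : ℝ :=
  if ∃ k : ℕ, (n : ℝ) * (1 / p - 1) = (k : ℝ) then
    t / (Real.log (Real.exp 1 + t) +
      (t * (1 + ‖x‖) ^ (n : ℝ)) ^ (1 - p) * (Real.log (Real.exp 1 + ‖x‖)) ^ p)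
  else
    t / (Real.log (Real.exp 1 + t) + (t * (1 + ‖x‖) ^ (n : ℝ)) ^ (1 - p))

/-- The Orlicz function `φ₀(t) = t / log(e+t)`. -/
def phi0 (t : ℝ) : ℝ := t / Real.log (Real.exp 1 + t)

/-- The weight `W_p`. -/
def Wp (n : ℕ) (p : ℝ) (x : Rn n) : ℝ :=
  if p = 1 then 1 / Real.log (Real.exp 1 + ‖x‖)
  else if ∃ k : ℕ, (n : ℝ) * (1 / p - 1) = (k : ℝ) then
    (1 + ‖x‖) ^ (-(n : ℝ) * (1 - p)) * (Real.log (Real.exp 1 + ‖x‖)) ^ (-p)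
  else (1 + ‖x‖) ^ (-(n : ℝ) * (1 - p))

/-- Extension of `Φ_p(x, ·)` to `ℝ≥0∞`. -/
def PhiE (n : ℕ) (p : ℝ) (x : Rn n) (t : ℝ≥0∞) : ℝ≥0∞ :=
  if t = ⊤ then ⊤ else ENNReal.ofReal (Phi n p x t.toReal)

/-- Extension of `φ₀` to `ℝ≥0∞`. -/
def phi0E (t : ℝ≥0∞) : ℝ≥0∞ :=
  if t = ⊤ then ⊤ else ENNReal.ofReal (phi0 t.toReal)

/-- The Luxemburg quasi-norm `‖·‖_{L^{Φ_p}}`. -/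
def luxPhiNorm (n : ℕ) (p : ℝ) (F : Rn n → ℝ≥0∞) : ℝ≥0∞ :=
  sInf {lam : ℝ≥0∞ | 0 < lam ∧ (∫⁻ x : Rn n, PhiE n p x (F x / lam)) ≤ 1}

/-- The Luxemburg norm `‖·‖_{L^{φ₀}}`. -/
def luxPhi0Norm (n : ℕ) (F : Rn n → ℝ≥0∞) : ℝ≥0∞ :=
  sInf {lam : ℝ≥0∞ | 0 < lam ∧ (∫⁻ x : Rn n, phi0E (F x / lam)) ≤ 1}

/-- The weighted quasi-norm `‖·‖_{L^p_{W_p}}`. -/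
def wNorm (n : ℕ) (p : ℝ) (F : Rn n → ℝ≥0∞) : ℝ≥0∞ :=
  (∫⁻ x : Rn n, F x ^ p * ENNReal.ofReal (Wp n p x)) ^ (1 / p)

/-- The weighted norm `‖·‖_{L^1_{W_1}}`. -/
def w1Norm (n : ℕ) (F : Rn n → ℝ≥0∞) : ℝ≥0∞ :=
  ∫⁻ x : Rn n, F x * ENNReal.ofReal (Wp n 1 x)

/-- The characteristic function of a set, `ℝ≥0∞`-valued. -/
def chi (n : ℕ) (B : Set (Rn n)) : Rn n → ℝ≥0∞ := B.indicator fun _ => 1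


-- ===== auxiliary lemmas =====
lemma loge_one_le {t : ℝ} (ht : 0 ≤ t) : 1 ≤ Real.log (Real.exp 1 + t) := by
  have := Real.exp_pos 1
  calc (1:ℝ) = Real.log (Real.exp 1) := (Real.log_exp 1).symm
  _ ≤ _ := Real.log_le_log (by positivity) (by linarith)

lemma loge_pos {t : ℝ} (ht : 0 ≤ t) : 0 < Real.log (Real.exp 1 + t) :=
  lt_of_lt_of_le one_pos (loge_one_le ht)

lemma log_e_add_mul_le {a b : ℝ} (ha : 0 ≤ a) (hb : 0 ≤ b) :
    Real.log (Real.exp 1 + a * b) ≤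
      Real.log (Real.exp 1 + a) + Real.log (Real.exp 1 + b) := by
  have he : (1:ℝ) ≤ Real.exp 1 := Real.one_le_exp one_pos.le
  have h1 : Real.exp 1 + a * b ≤ (Real.exp 1 + a) * (Real.exp 1 + b) := by nlinarith
  calc Real.log (Real.exp 1 + a * b) ≤ Real.log ((Real.exp 1 + a) * (Real.exp 1 + b)) :=
        Real.log_le_log (by positivity) h1
  _ = _ := Real.log_mul (by positivity) (by positivity)

lemma Phi_one (n : ℕ) (x : Rn n) (t : ℝ) :
    Phi n 1 x t = t / (Real.log (Real.exp 1 + t) + Real.log (Real.exp 1 + ‖x‖)) := by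
  have hc : ∃ k : ℕ, (n : ℝ) * (1 / 1 - 1) = (k : ℝ) := ⟨0, by norm_num⟩
  rw [Phi, if_pos hc]
  norm_num

/-- The basic integral identity. -/
lemma integral_eq (n : ℕ) (c : Rn n) (r : ℝ) (hr : 0 < r) {l : ℝ} (hl : 0 < l) :
    (∫⁻ x : Rn n, PhiE n 1 x (chi n (Metric.ball c r) x / ENNReal.ofReal l)) =
      ∫⁻ x in Metric.ball c r,
        ENNReal.ofReal (l⁻¹ / (Real.log (Real.exp 1 + l⁻¹) + Real.log (Real.exp 1 + ‖x‖))) := by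
  rw [← lintegral_indicator measurableSet_ball]
  congr 1
  funext x
  by_cases hx : x ∈ Metric.ball c r
  · rw [Set.indicator_of_mem hx]
    have h1 : chi n (Metric.ball c r) x = 1 := by
      simp [chi, Set.indicator_of_mem hx]
    rw [h1]
    have h2 : (1 : ℝ≥0∞) / ENNReal.ofReal l = ENNReal.ofReal l⁻¹ := by
      rw [one_div, ← ENNReal.ofReal_inv_of_pos hl]
    rw [h2, PhiE, if_neg ENNReal.ofReal_ne_top,
      ENNReal.toReal_ofReal (by positivity), Phi_one]
  · rw [Set.indicator_of_notMem hx]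
    have h1 : chi n (Metric.ball c r) x = 0 := by
      simp [chi, Set.indicator_of_notMem hx]
    rw [h1, ENNReal.zero_div, PhiE, if_neg (by simp)]
    simp [Phi_one]

lemma const_bound {n : ℕ} (c : Rn n) (r : ℝ) {a L k : ℝ} (haL : 0 < a + L) (hk : 0 ≤ k)
    (hk' : k ≤ 10 * 3 ^ n)
    (hpt : ∀ x ∈ Metric.ball c r, a + L ≤ k * (a + Real.log (Real.exp 1 + ‖x‖))) :
    (∫⁻ x in Metric.ball c r,
        ENNReal.ofReal (1 / (a + Real.log (Real.exp 1 + ‖x‖)))) ≤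
      ENNReal.ofReal (10 * 3 ^ n * (volume (Metric.ball c r)).toReal / (a + L)) := by
  have hV : volume (Metric.ball c r) ≠ ⊤ := measure_ball_lt_top.ne
  set v := (volume (Metric.ball c r)).toReal with hv
  have hv0 : 0 ≤ v := ENNReal.toReal_nonneg
  calc (∫⁻ x in Metric.ball c r,
        ENNReal.ofReal (1 / (a + Real.log (Real.exp 1 + ‖x‖))))
      ≤ ∫⁻ _ in Metric.ball c r, ENNReal.ofReal (k / (a + L)) := by
        apply setLIntegral_mono' measurableSet_ball
        intro x hx
        apply ENNReal.ofReal_le_ofReal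
        have h1 := hpt x hx
        have h2 : 0 < k * (a + Real.log (Real.exp 1 + ‖x‖)) := lt_of_lt_of_le haL h1
        have hk0 : 0 < k := by
          rcases lt_or_eq_of_le hk with h | h
          · exact h
          · exfalso; rw [← h] at h2; simp at h2
        have h3 : 0 < a + Real.log (Real.exp 1 + ‖x‖) := by
          rcases mul_pos_iff.mp h2 with ⟨_, h⟩ | ⟨h, _⟩
          · exact h
          · linarith
        rw [div_le_div_iff₀ h3 haL]
        linarith
    _ = ENNReal.ofReal (k / (a + L)) * volume (Metric.ball c r) := setLIntegral_const _ _
    _ = ENNReal.ofReal (k / (a + L) * v) := by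
        rw [← ENNReal.ofReal_toReal hV, ← hv, ← ENNReal.ofReal_mul (by positivity)]
    _ ≤ ENNReal.ofReal (10 * 3 ^ n * v / (a + L)) := by
        apply ENNReal.ofReal_le_ofReal
        rw [div_mul_eq_mul_div]
        gcongr

lemma norm_le_of_mem_ball {n : ℕ} {c x : Rn n} {r : ℝ} (hx : x ∈ Metric.ball c r) :
    ‖x‖ ≤ ‖c‖ + r := by
  have h1 : dist x c < r := Metric.mem_ball.mp hx
  have h2 : ‖x‖ ≤ ‖c‖ + ‖x - c‖ := by
    calc ‖x‖ = ‖c + (x - c)‖ := by rw [show c + (x - c) = x by abel]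
    _ ≤ ‖c‖ + ‖x - c‖ := norm_add_le _ _
  rw [← dist_eq_norm] at h2
  linarith

lemma log_three_le_two : Real.log 3 ≤ 2 := by
  have := Real.log_le_sub_one_of_pos (x := 3) (by norm_num)
  linarith

lemma exp_one_lt_three : Real.exp 1 < 3 := by
  have := Real.exp_one_lt_d9
  linarith

lemma key_upper (n : ℕ) (hn : 1 ≤ n) (c : Rn n) (r : ℝ) (hr : 0 < r) {a : ℝ} (ha : 1 ≤ a) :
    (∫⁻ x in Metric.ball c r,
        ENNReal.ofReal (1 / (a + Real.log (Real.exp 1 + ‖x‖)))) ≤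
      ENNReal.ofReal (10 * 3 ^ n * (volume (Metric.ball c r)).toReal /
        (a + Real.log (Real.exp 1 + (‖c‖ + r)))) := by
  have he : (1:ℝ) ≤ Real.exp 1 := Real.one_le_exp one_pos.le
  set L := Real.log (Real.exp 1 + (‖c‖ + r)) with hLdef
  have hL1 : 1 ≤ L := loge_one_le (by positivity)
  have haL : 0 < a + L := by linarith
  have hkn : (3:ℝ) ≤ 10 * 3 ^ n := by
    have : (1:ℝ) ≤ 3 ^ n := one_le_pow₀ (by norm_num)
    nlinarith
  have hℓ1 : ∀ x : Rn n, 1 ≤ Real.log (Real.exp 1 + ‖x‖) := fun x => loge_one_le (norm_nonneg x)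
  rcases le_or_gt (2 * r) ‖c‖ with hca | hca
  · -- Case A : 2r ≤ ‖c‖, pointwise bound with k = 3
    apply const_bound c r (k := 3) haL (by norm_num) hkn
    intro x hx
    have h1 : ‖c‖ - r ≤ ‖x‖ := by
      have : dist x c < r := Metric.mem_ball.mp hx
      have h2 : ‖c‖ ≤ ‖x‖ + ‖c - x‖ := by
        calc ‖c‖ = ‖x + (c - x)‖ := by rw [show x + (c - x) = c by abel]
        _ ≤ ‖x‖ + ‖c - x‖ := norm_add_le _ _
      rw [← dist_eq_norm, dist_comm] at h2
      linarith
    have h0 : (0:ℝ) ≤ ‖c‖ - r := by linarith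
    have h2 : L ≤ Real.log 3 + Real.log (Real.exp 1 + (‖c‖ - r)) := by
      have h3 : Real.exp 1 + (‖c‖ + r) ≤ 3 * (Real.exp 1 + (‖c‖ - r)) := by linarith
      calc L ≤ Real.log (3 * (Real.exp 1 + (‖c‖ - r))) := Real.log_le_log (by positivity) h3
      _ = _ := Real.log_mul (by norm_num) (by positivity)
    have h4 : Real.log (Real.exp 1 + (‖c‖ - r)) ≤ Real.log (Real.exp 1 + ‖x‖) :=
      Real.log_le_log (by positivity) (by linarith)
    have := hℓ1 x
    have := log_three_le_two
    nlinarith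
  rcases le_or_gt (1:ℝ) r with hr1 | hr1
  · -- Case C : ‖c‖ < 2r, 1 ≤ r : split at ρ = sqrt (3 r)
    set ρ := Real.sqrt (3 * r) with hρdef
    have hr3 : (0:ℝ) < 3 * r := by linarith
    have hρ0 : 0 < ρ := Real.sqrt_pos.mpr hr3
    have hρsq : ρ ^ 2 = 3 * r := Real.sq_sqrt hr3.le
    have hLρ : L ≤ 2 * Real.log (Real.exp 1 + ρ) := by
      have h1 : Real.exp 1 + (‖c‖ + r) ≤ (Real.exp 1 + ρ) ^ 2 := by nlinarith
      calc L ≤ Real.log ((Real.exp 1 + ρ) ^ 2) := Real.log_le_log (by positivity) h1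
      _ = 2 * Real.log (Real.exp 1 + ρ) := by
          rw [Real.log_pow]; norm_num
    have hpt : ∀ x ∈ Metric.ball c r,
        ENNReal.ofReal (1 / (a + Real.log (Real.exp 1 + ‖x‖))) ≤
          ENNReal.ofReal (2 / (a + L)) +
            (Metric.ball (0:Rn n) ρ).indicator (fun _ => ENNReal.ofReal (1 / (a + 1))) x := by
      intro x _
      by_cases hxρ : ‖x‖ < ρ
      · have hmem : x ∈ Metric.ball (0:Rn n) ρ := mem_ball_zero_iff.mpr hxρ
        rw [Set.indicator_of_mem hmem]
        refine le_trans (ENNReal.ofReal_le_ofReal ?_) (self_le_add_left _ _)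
        exact one_div_le_one_div_of_le (by linarith) (by linarith [hℓ1 x])
      · push_neg at hxρ
        have hnmem : x ∉ Metric.ball (0:Rn n) ρ := by
          simp [mem_ball_zero_iff, not_lt, hxρ]
        rw [Set.indicator_of_notMem hnmem, add_zero]
        apply ENNReal.ofReal_le_ofReal
        have h5 : Real.log (Real.exp 1 + ρ) ≤ Real.log (Real.exp 1 + ‖x‖) :=
          Real.log_le_log (by positivity) (by linarith)
        have h6 := hℓ1 x
        rw [div_le_div_iff₀ (by linarith) haL]
        nlinarith
    -- volumes
    haveI : Nonempty (Fin n) := ⟨⟨0, hn⟩⟩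
    set W := volume (Metric.ball (0:Rn n) 1) with hWdef
    have hWtop : W ≠ ⊤ := measure_ball_lt_top.ne
    have hW0 : W ≠ 0 := (Metric.measure_ball_pos volume _ one_pos).ne'
    set w := W.toReal with hwdef
    have hw0 : 0 < w := ENNReal.toReal_pos hW0 hWtop
    have hball1 : volume (Metric.ball c r) = ENNReal.ofReal (r ^ n) * W := by
      rw [Measure.addHaar_ball volume c hr.le, finrank_euclideanSpace_fin]
    have hball2 : volume (Metric.ball (0:Rn n) ρ) = ENNReal.ofReal (ρ ^ n) * W := by
      rw [Measure.addHaar_ball volume _ hρ0.le, finrank_euclideanSpace_fin]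
    have hveq : (volume (Metric.ball c r)).toReal = r ^ n * w := by
      rw [hball1, ENNReal.toReal_mul, ENNReal.toReal_ofReal (by positivity)]
    -- the integral estimate
    calc (∫⁻ x in Metric.ball c r,
          ENNReal.ofReal (1 / (a + Real.log (Real.exp 1 + ‖x‖))))
        ≤ ∫⁻ x in Metric.ball c r, (ENNReal.ofReal (2 / (a + L)) +
            (Metric.ball (0:Rn n) ρ).indicator (fun _ => ENNReal.ofReal (1 / (a + 1))) x) :=
          setLIntegral_mono' measurableSet_ball hpt
      _ = ENNReal.ofReal (2 / (a + L)) * volume (Metric.ball c r) +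
            ∫⁻ x in Metric.ball c r,
              (Metric.ball (0:Rn n) ρ).indicator (fun _ => ENNReal.ofReal (1 / (a + 1))) x := by
          rw [lintegral_add_left measurable_const, setLIntegral_const]
      _ ≤ ENNReal.ofReal (2 / (a + L)) * volume (Metric.ball c r) +
            ENNReal.ofReal (1 / (a + 1)) * volume (Metric.ball (0:Rn n) ρ) := by
          gcongr
          calc (∫⁻ x in Metric.ball c r,
              (Metric.ball (0:Rn n) ρ).indicator (fun _ => ENNReal.ofReal (1 / (a + 1))) x)
              ≤ ∫⁻ x, (Metric.ball (0:Rn n) ρ).indicator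
                  (fun _ => ENNReal.ofReal (1 / (a + 1))) x :=
                setLIntegral_le_lintegral _ _
            _ = ENNReal.ofReal (1 / (a + 1)) * volume (Metric.ball (0:Rn n) ρ) := by
                rw [lintegral_indicator measurableSet_ball, setLIntegral_const]
      _ ≤ ENNReal.ofReal (10 * 3 ^ n * (volume (Metric.ball c r)).toReal / (a + L)) := by
          rw [hball1, hball2, ← ENNReal.ofReal_toReal hWtop, ← hwdef,
            ← ENNReal.ofReal_mul (by positivity), ← ENNReal.ofReal_mul (by positivity),
            ← ENNReal.ofReal_mul (by positivity), ← ENNReal.ofReal_mul (by positivity),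
            ← ENNReal.ofReal_add (by positivity) (by positivity), ENNReal.toReal_ofReal (by positivity)]
          apply ENNReal.ofReal_le_ofReal
          -- now a real inequality
          set t := Real.sqrt r ^ n with htdef
          have hsr1 : (1:ℝ) ≤ Real.sqrt r := by
            rw [show (1:ℝ) = Real.sqrt 1 by rw [Real.sqrt_one]]
            exact Real.sqrt_le_sqrt (by linarith)
          have ht1 : (1:ℝ) ≤ t := one_le_pow₀ hsr1
          have hrt : r ^ n = t ^ 2 := by
            rw [htdef, ← pow_mul, mul_comm n 2, pow_mul, Real.sq_sqrt (by linarith)]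
          have hρt : ρ ^ n = Real.sqrt 3 ^ n * t := by
            rw [hρdef, Real.sqrt_mul (by norm_num), mul_pow, htdef]
          have hs3 : Real.sqrt 3 ≤ 3 := by
            have h := Real.sqrt_le_sqrt (by norm_num : (3:ℝ) ≤ 9)
            rwa [show (9:ℝ) = 3 ^ 2 by norm_num, Real.sqrt_sq (by norm_num)] at h
          have h3n : Real.sqrt 3 ^ n ≤ 3 ^ n :=
            pow_le_pow_left₀ (Real.sqrt_nonneg 3) hs3 n
          have h3n1 : (1:ℝ) ≤ 3 ^ n := one_le_pow₀ (by norm_num)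
          have hlogr : Real.log r ≤ 2 * Real.sqrt r := by
            have h7 : Real.log (Real.sqrt r) ≤ Real.sqrt r - 1 :=
              Real.log_le_sub_one_of_pos (by positivity)
            have h8 : Real.log (Real.sqrt r) = Real.log r / 2 := Real.log_sqrt hr.le
            linarith
          have hLa : L ≤ 5 + 2 * t := by
            have hsrt : Real.sqrt r ≤ t := le_self_pow₀ hsr1 (by omega)
            have h9 : L ≤ Real.log (3 * (Real.exp 1 + r)) := by
              apply Real.log_le_log (by positivity); nlinarith
            have h10 : Real.log (3 * (Real.exp 1 + r)) =
                Real.log 3 + Real.log (Real.exp 1 + r) := Real.log_mul (by norm_num) (by positivity)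
            have h11 : Real.log (Real.exp 1 + r) ≤ Real.log ((Real.exp 1 + 1) * r) := by
              apply Real.log_le_log (by positivity); nlinarith
            have h12 : Real.log ((Real.exp 1 + 1) * r) = Real.log (Real.exp 1 + 1) + Real.log r :=
              Real.log_mul (by positivity) (by positivity)
            have h13 : Real.log (Real.exp 1 + 1) ≤ Real.exp 1 := by
              have := Real.log_le_sub_one_of_pos (x := Real.exp 1 + 1) (by positivity)
              linarith
            have h14 := _root_.exp_one_lt_three
            have h15 := log_three_le_two
            linarith
          rw [hrt, hρt]
          have hk1 : a + L ≤ 6 * t * (a + 1) := by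
            nlinarith [mul_nonneg (by linarith : (0:ℝ) ≤ a - 1) (by linarith : (0:ℝ) ≤ t - 1)]
          have key : Real.sqrt 3 ^ n * t * w * (a + L) ≤ 8 * 3 ^ n * (t ^ 2 * w) * (a + 1) := by
            have k2 : Real.sqrt 3 ^ n * t * w * (a + L) ≤ 3 ^ n * t * w * (6 * t * (a + 1)) := by
              apply mul_le_mul ?_ hk1 (by positivity) (by positivity)
              have : (0:ℝ) ≤ t * w := by positivity
              nlinarith
            have k3 : 3 ^ n * t * w * (6 * t * (a + 1)) = 6 * (3 ^ n * (t ^ 2 * w) * (a + 1)) := by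
              ring
            have k4 : (0:ℝ) ≤ 3 ^ n * (t ^ 2 * w) * (a + 1) := by positivity
            linarith [k2, k3.le]
          have termA : 2 / (a + L) * (t ^ 2 * w) ≤ 2 * 3 ^ n * (t ^ 2 * w) / (a + L) := by
            rw [show 2 / (a + L) * (t ^ 2 * w) = 2 * (t ^ 2 * w) / (a + L) by ring]
            gcongr
            nlinarith [h3n1, (by positivity : (0:ℝ) ≤ t ^ 2 * w)]
          have termB : 1 / (a + 1) * (Real.sqrt 3 ^ n * t * w) ≤
              8 * 3 ^ n * (t ^ 2 * w) / (a + L) := by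
            rw [show 1 / (a + 1) * (Real.sqrt 3 ^ n * t * w) =
              Real.sqrt 3 ^ n * t * w / (a + 1) by ring,
              div_le_div_iff₀ (by linarith) haL]
            nlinarith [key]
          calc 2 / (a + L) * (t ^ 2 * w) + 1 / (a + 1) * (Real.sqrt 3 ^ n * t * w)
              ≤ 2 * 3 ^ n * (t ^ 2 * w) / (a + L) + 8 * 3 ^ n * (t ^ 2 * w) / (a + L) :=
                add_le_add termA termB
            _ = 10 * 3 ^ n * (t ^ 2 * w) / (a + L) := by
                rw [← add_div]; ring_nf

  · -- Case B : ‖c‖ < 2r, r < 1, pointwise bound with k = 2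
    apply const_bound c r (k := 2) haL (by norm_num) (by linarith)
    intro x hx
    have h2 : L ≤ 2 := by
      have h3 : Real.exp 1 + (‖c‖ + r) ≤ Real.exp 1 * Real.exp 1 := by
        have h9 : (2.7:ℝ) < Real.exp 1 := by
          have := Real.exp_one_gt_d9; linarith
        have := _root_.exp_one_lt_three
        nlinarith
      calc L ≤ Real.log (Real.exp 1 * Real.exp 1) := Real.log_le_log (by positivity) h3
      _ = 2 := by rw [Real.log_mul (by positivity) (by positivity), Real.log_exp]; norm_num
    have := hℓ1 x
    nlinarith

lemma key_lower (n : ℕ) (c : Rn n) (r : ℝ) (hr : 0 ≤ r) {s a : ℝ} (hs : 0 ≤ s) (ha : 0 ≤ a) :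
    ENNReal.ofReal (s * (volume (Metric.ball c r)).toReal /
        (a + Real.log (Real.exp 1 + (‖c‖ + r)))) ≤
      ∫⁻ x in Metric.ball c r,
        ENNReal.ofReal (s / (a + Real.log (Real.exp 1 + ‖x‖))) := by
  have hV : volume (Metric.ball c r) ≠ ⊤ := measure_ball_lt_top.ne
  set L := Real.log (Real.exp 1 + (‖c‖ + r)) with hLdef
  have hL1 : 1 ≤ L := loge_one_le (add_nonneg (norm_nonneg c) hr)
  have hstep : ENNReal.ofReal (s * (volume (Metric.ball c r)).toReal / (a + L)) =
      ENNReal.ofReal (s / (a + L)) * volume (Metric.ball c r) := by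
    calc ENNReal.ofReal (s * (volume (Metric.ball c r)).toReal / (a + L))
        = ENNReal.ofReal (s / (a + L)) *
            ENNReal.ofReal ((volume (Metric.ball c r)).toReal) := by
          rw [← ENNReal.ofReal_mul (div_nonneg hs (by linarith))]
          congr 1
          ring
      _ = ENNReal.ofReal (s / (a + L)) * volume (Metric.ball c r) := by
          rw [ENNReal.ofReal_toReal hV]
  rw [hstep, ← setLIntegral_const]
  apply setLIntegral_mono' measurableSet_ball
  intro x hx
  apply ENNReal.ofReal_le_ofReal
  have h1 : Real.log (Real.exp 1 + ‖x‖) ≤ L :=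
    Real.log_le_log (by positivity) (by linarith [norm_le_of_mem_ball hx])
  have h2 : 1 ≤ Real.log (Real.exp 1 + ‖x‖) := loge_one_le (norm_nonneg x)
  gcongr

lemma norm_upper (n : ℕ) (hn : 1 ≤ n) (c : Rn n) (r : ℝ) (hr : 0 < r) :
    luxPhiNorm n 1 (chi n (Metric.ball c r)) ≤
      ENNReal.ofReal ((10 * 3 ^ n) ^ 2 * (volume (Metric.ball c r)).toReal /
        (Real.log (Real.exp 1 + 1 / (volume (Metric.ball c r)).toReal) +
          Real.log (Real.exp 1 + (‖c‖ + r)))) := by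
  have he : (1:ℝ) ≤ Real.exp 1 := Real.one_le_exp one_pos.le
  set v := (volume (Metric.ball c r)).toReal with hvdef
  have hv0 : 0 < v := ENNReal.toReal_pos (Metric.measure_ball_pos volume c hr).ne'
    measure_ball_lt_top.ne
  set L := Real.log (Real.exp 1 + (‖c‖ + r)) with hLdef
  have hL1 : 1 ≤ L := loge_one_le (by positivity)
  set D := Real.log (Real.exp 1 + 1 / v) + L with hDdef
  have hD2 : 2 ≤ D := by
    have h := loge_one_le (t := 1 / v) (by positivity)
    rw [hDdef]
    linarith
  set M : ℕ := 10 * 3 ^ n with hMdef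
  set K : ℝ := (M : ℝ) with hKdef
  have hK : K = 10 * 3 ^ n := by rw [hKdef, hMdef]; push_cast; ring
  have hK1 : (1:ℝ) ≤ K := by
    have : (1:ℝ) ≤ 3 ^ n := one_le_pow₀ (by norm_num)
    rw [hK]; nlinarith
  set l := K ^ 2 * v / D with hldef
  have hl0 : 0 < l := by rw [hldef]; positivity
  have hs : l⁻¹ = D / (K ^ 2 * v) := by rw [hldef]; rw [inv_div]
  have hgoal : (10 * 3 ^ n : ℝ) ^ 2 * v / D = l := by rw [hldef, hK]
  rw [hgoal]
  apply sInf_le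
  refine ⟨ENNReal.ofReal_pos.mpr hl0, ?_⟩
  rw [integral_eq n c r hr hl0]
  set s := l⁻¹ with hsdef
  have hs0 : 0 < s := by positivity
  set a := Real.log (Real.exp 1 + s) with hadef
  have ha1 : 1 ≤ a := loge_one_le hs0.le
  have heq : ∀ x : Rn n, ENNReal.ofReal (s / (a + Real.log (Real.exp 1 + ‖x‖))) =
      ENNReal.ofReal s * ENNReal.ofReal (1 / (a + Real.log (Real.exp 1 + ‖x‖))) := by
    intro x
    rw [← ENNReal.ofReal_mul hs0.le]
    congr 1
    ring
  calc (∫⁻ x in Metric.ball c r,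
        ENNReal.ofReal (s / (a + Real.log (Real.exp 1 + ‖x‖))))
      = ENNReal.ofReal s * ∫⁻ x in Metric.ball c r,
          ENNReal.ofReal (1 / (a + Real.log (Real.exp 1 + ‖x‖))) := by
        simp_rw [heq]
        rw [lintegral_const_mul' _ _ ENNReal.ofReal_ne_top]
    _ ≤ ENNReal.ofReal s * ENNReal.ofReal (10 * 3 ^ n * v / (a + L)) := by
        gcongr
        exact key_upper n hn c r hr ha1
    _ = ENNReal.ofReal (s * (10 * 3 ^ n * v / (a + L))) := by
        rw [← ENNReal.ofReal_mul hs0.le]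
    _ ≤ 1 := by
        rw [ENNReal.ofReal_le_one]
        -- key real computation
        have haL : 0 < a + L := by linarith
        have hKne : K ≠ 0 := by linarith
        rw [show s * (10 * 3 ^ n * v / (a + L)) = s * (10 * 3 ^ n * v) / (a + L) by ring,
          div_le_one haL]
        have hsv : s * (10 * 3 ^ n * v) = D / K := by
          rw [hs, show (10 * 3 ^ n : ℝ) = K from hK.symm]
          field_simp
        rw [hsv]
        rw [div_le_iff₀ (by linarith : (0:ℝ) < K)]
        -- suffices: log(e+1/v) ≤ K * a and L ≤ K * L
        have hbin : Real.exp 1 + 1 / v ≤ (Real.exp 1 + s) ^ M := by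
          obtain ⟨m, hm⟩ : ∃ m, M = m + 1 := by
            refine ⟨M - 1, ?_⟩
            have : 1 ≤ M := by
              have : (1:ℝ) ≤ K := hK1
              rw [hKdef] at this
              exact_mod_cast this
            omega
          have h1 : (1:ℝ) + (M : ℝ) * (s / Real.exp 1) ≤ (1 + s / Real.exp 1) ^ M :=
            one_add_mul_le_pow (le_trans (by norm_num : (-2:ℝ) ≤ 0) (by positivity)) M
          have h2 : (Real.exp 1 + s) ^ M = Real.exp 1 ^ M * (1 + s / Real.exp 1) ^ M := by
            rw [← mul_pow]
            congr 1
            field_simp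
          have h3 : Real.exp 1 ^ M = Real.exp 1 ^ m * Real.exp 1 := by
            rw [hm, pow_succ]
          have h4 : (M : ℝ) ≤ Real.exp 1 ^ m := by
            rw [Real.exp_one_pow]
            have := Real.add_one_le_exp (m : ℝ)
            rw [hm]; push_cast; linarith
          have h5 : Real.exp 1 ≤ Real.exp 1 ^ M := le_self_pow₀ he (by omega : M ≠ 0)
          have h6 : 2 / (K ^ 2 * v) ≤ s := by
            rw [hs]
            gcongr
          -- (e+s)^M ≥ e^M + M * s * e^m ≥ e + K^2 * s ≥ e + 1/v
          have h7 : Real.exp 1 ^ M * (1 + s / Real.exp 1) ^ M ≥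
              Real.exp 1 ^ M + (M : ℝ) * s * Real.exp 1 ^ m := by
            have h8 : Real.exp 1 ^ M * (1 + (M : ℝ) * (s / Real.exp 1)) =
                Real.exp 1 ^ M + (M : ℝ) * s * Real.exp 1 ^ m := by
              rw [h3]; field_simp
            nlinarith [pow_pos (Real.exp_pos 1) M, h1]
          have h9 : (M : ℝ) * s * Real.exp 1 ^ m ≥ K ^ 2 * s := by
            have hK2 : K ^ 2 * s = (M : ℝ) * s * (M : ℝ) := by
              rw [show K = (M:ℝ) from hKdef]; ring
            have hint : 0 ≤ (M : ℝ) * s * (Real.exp 1 ^ m - (M : ℝ)) :=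
              mul_nonneg (mul_nonneg (by positivity) hs0.le) (sub_nonneg.mpr h4)
            nlinarith [hint, hK2]
          have h10 : K ^ 2 * s ≥ 2 / v := by
            have h11 : K ^ 2 * (2 / (K ^ 2 * v)) = 2 / v := by
              field_simp
              try ring
            nlinarith [h6, sq_nonneg K]
          have h12 : 2 / v ≥ 1 / v := by gcongr <;> norm_num
          rw [h2]
          nlinarith [h7, h9, h10, h12, h5]
        have h13 : Real.log (Real.exp 1 + 1 / v) ≤ K * a := by
          calc Real.log (Real.exp 1 + 1 / v) ≤ Real.log ((Real.exp 1 + s) ^ M) :=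
            Real.log_le_log (by positivity) hbin
          _ = K * a := by rw [Real.log_pow, hadef, hKdef]
        have h14 : L ≤ K * L := by nlinarith
        rw [hDdef]
        linarith

lemma norm_lower (n : ℕ) (c : Rn n) (r : ℝ) (hr : 0 < r) :
    ENNReal.ofReal ((volume (Metric.ball c r)).toReal /
        (5 * (Real.log (Real.exp 1 + 1 / (volume (Metric.ball c r)).toReal) +
          Real.log (Real.exp 1 + (‖c‖ + r))))) ≤
      luxPhiNorm n 1 (chi n (Metric.ball c r)) := by
  have he : (1:ℝ) ≤ Real.exp 1 := Real.one_le_exp one_pos.le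
  set v := (volume (Metric.ball c r)).toReal with hvdef
  have hv0 : 0 < v := ENNReal.toReal_pos (Metric.measure_ball_pos volume c hr).ne'
    measure_ball_lt_top.ne
  set L := Real.log (Real.exp 1 + (‖c‖ + r)) with hLdef
  have hL1 : 1 ≤ L := loge_one_le (by positivity)
  set E := Real.log (Real.exp 1 + 1 / v) with hEdef
  have hE1 : 1 ≤ E := loge_one_le (by positivity)
  apply le_sInf
  rintro lam ⟨hpos, hint⟩
  by_contra hcon
  push_neg at hcon
  have htop : lam ≠ ⊤ := by
    intro h
    rw [h] at hcon
    exact not_top_lt hcon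
  set l := lam.toReal with hldef
  have hl0 : 0 < l := ENNReal.toReal_pos hpos.ne' htop
  have hlv : l < v / (5 * (E + L)) := by
    rw [hldef]
    exact (ENNReal.lt_ofReal_iff_toReal_lt htop).mp hcon
  rw [show lam = ENNReal.ofReal l from (ENNReal.ofReal_toReal htop).symm,
    integral_eq n c r hr hl0] at hint
  set s := l⁻¹ with hsdef
  have hs0 : 0 < s := by positivity
  set a := Real.log (Real.exp 1 + s) with hadef
  have ha1 : 1 ≤ a := loge_one_le hs0.le
  have haL : 0 < a + L := by linarith
  have hlow := key_lower n c r hr.le hs0.le (by linarith : (0:ℝ) ≤ a)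
  have hle1 : s * v ≤ a + L := by
    have h2 := le_trans hlow hint
    rw [ENNReal.ofReal_le_one, div_le_one haL] at h2
    exact h2
  -- derive contradiction
  have hsv : 5 * (E + L) < s * v := by
    have h3 : l * (5 * (E + L)) < v := (lt_div_iff₀ (by positivity)).mp hlv
    have h4 : 5 * (E + L) < v / l := (lt_div_iff₀ hl0).mpr (by linarith)
    rw [div_eq_mul_inv, ← hsdef, mul_comm] at h4
    linarith [h4]
  have hsv10 : 10 < s * v := by linarith
  have ha_le : a ≤ Real.log (Real.exp 1 + s * v) + E := by
    have h5 : s = s * v * (1 / v) := by field_simp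
    calc a = Real.log (Real.exp 1 + s * v * (1 / v)) := by rw [hadef, ← h5]
    _ ≤ Real.log (Real.exp 1 + s * v) + Real.log (Real.exp 1 + 1 / v) :=
        log_e_add_mul_le (by positivity) (by positivity)
    _ = Real.log (Real.exp 1 + s * v) + E := by rw [hEdef]
  have hlog2 : Real.log (Real.exp 1 + s * v) ≤ 1 + s * v / Real.exp 1 := by
    have h6 : Real.exp 1 + s * v ≤ 2 * (s * v) := by
      have := _root_.exp_one_lt_three
      linarith
    have h7 : Real.log (Real.exp 1 + s * v) ≤ Real.log (2 * (s * v)) :=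
      Real.log_le_log (by positivity) h6
    have h8 : Real.log (2 * (s * v)) = Real.log 2 + Real.log (s * v) :=
      Real.log_mul (by norm_num) (by positivity)
    have h9 : Real.log 2 ≤ 1 := by
      have := Real.log_le_sub_one_of_pos (x := 2) (by norm_num)
      linarith
    have h10 : Real.log (s * v) ≤ s * v / Real.exp 1 := by
      have h11 := Real.log_le_sub_one_of_pos (x := s * v / Real.exp 1) (by positivity)
      have h12 : Real.log (s * v / Real.exp 1) = Real.log (s * v) - 1 := by
        rw [Real.log_div (by positivity) (Real.exp_ne_zero 1), Real.log_exp]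
      linarith
    linarith
  have hdiv : s * v / Real.exp 1 ≤ s * v / 2 := by
    have h13 : (2:ℝ) ≤ Real.exp 1 := by
      have := Real.exp_one_gt_d9
      linarith
    gcongr
  linarith

lemma log_e_add_le_abs {u : ℝ} (hu : 0 < u) :
    Real.log (Real.exp 1 + u) ≤ Real.log (Real.exp 1 + 1) + |Real.log u| := by
  have he : (1:ℝ) ≤ Real.exp 1 := Real.one_le_exp one_pos.le
  rcases le_or_gt u 1 with h | h
  · have h1 : Real.log (Real.exp 1 + u) ≤ Real.log (Real.exp 1 + 1) :=
      Real.log_le_log (by positivity) (by linarith)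
    have := abs_nonneg (Real.log u)
    linarith
  · have h2 : Real.exp 1 + u ≤ (Real.exp 1 + 1) * u := by nlinarith
    have h3 : Real.log (Real.exp 1 + u) ≤ Real.log ((Real.exp 1 + 1) * u) :=
      Real.log_le_log (by positivity) h2
    rw [Real.log_mul (by positivity) (ne_of_gt hu)] at h3
    have h4 : Real.log u ≤ |Real.log u| := le_abs_self _
    linarith

lemma log_e_add_pow_le {u : ℝ} (hu : 0 ≤ u) {n : ℕ} (hn : 1 ≤ n) :
    Real.log (Real.exp 1 + u ^ n) ≤ n * Real.log (Real.exp 1 + u) := by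
  have he : (1:ℝ) ≤ Real.exp 1 := Real.one_le_exp one_pos.le
  have h1 : Real.exp 1 + u ^ n ≤ (Real.exp 1 + u) ^ n := by
    have h2 := pow_add_pow_le (x := Real.exp 1) (y := u) (by positivity) hu
      (by omega : n ≠ 0)
    have h3 : Real.exp 1 ≤ Real.exp 1 ^ n := le_self_pow₀ he (by omega)
    linarith
  calc Real.log (Real.exp 1 + u ^ n) ≤ Real.log ((Real.exp 1 + u) ^ n) :=
      Real.log_le_log (by positivity) h1
  _ = n * Real.log (Real.exp 1 + u) := Real.log_pow _ n

lemma sup_bounds (n : ℕ) (hn : 1 ≤ n) (c : Rn n) (r : ℝ) (hr : 0 < r) :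
    (⨆ x : Metric.ball c r, Real.log (Real.exp 1 + ‖(x : Rn n)‖)) ≤
        Real.log (Real.exp 1 + (‖c‖ + r)) ∧
      1 ≤ (⨆ x : Metric.ball c r, Real.log (Real.exp 1 + ‖(x : Rn n)‖)) ∧
      Real.log (Real.exp 1 + (‖c‖ + r)) ≤
        (⨆ x : Metric.ball c r, Real.log (Real.exp 1 + ‖(x : Rn n)‖)) + 1 := by
  have he : (1:ℝ) ≤ Real.exp 1 := Real.one_le_exp one_pos.le
  set L := Real.log (Real.exp 1 + (‖c‖ + r)) with hLdef
  haveI hne : Nonempty (Metric.ball c r) := ⟨⟨c, Metric.mem_ball_self hr⟩⟩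
  have hub : ∀ x : Metric.ball c r, Real.log (Real.exp 1 + ‖(x : Rn n)‖) ≤ L := by
    rintro ⟨x, hx⟩
    exact Real.log_le_log (by positivity) (by linarith [norm_le_of_mem_ball hx])
  have hbdd : BddAbove (Set.range fun x : Metric.ball c r =>
      Real.log (Real.exp 1 + ‖(x : Rn n)‖)) := by
    refine ⟨L, ?_⟩
    rintro y ⟨x, rfl⟩
    exact hub x
  have h1 : (⨆ x : Metric.ball c r, Real.log (Real.exp 1 + ‖(x : Rn n)‖)) ≤ L := ciSup_le hub
  -- witness point
  set u : Rn n := if c = 0 then EuclideanSpace.single (⟨0, hn⟩ : Fin n) (1:ℝ)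
    else ‖c‖⁻¹ • c with hudef
  have hu : ‖u‖ = 1 := by
    by_cases hc : c = 0
    · rw [hudef, if_pos hc, EuclideanSpace.norm_single]
      norm_num
    · rw [hudef, if_neg hc, norm_smul, norm_inv, norm_norm,
        inv_mul_cancel₀ (norm_ne_zero_iff.mpr hc)]
  set y := c + (r / 2) • u with hydef
  have hymem : y ∈ Metric.ball c r := by
    rw [Metric.mem_ball, dist_eq_norm, hydef, add_sub_cancel_left, norm_smul, hu, mul_one,
      Real.norm_eq_abs, abs_of_pos (by linarith)]
    linarith
  have hynorm : ‖y‖ = ‖c‖ + r / 2 := by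
    by_cases hc : c = 0
    · rw [hydef, hc, zero_add, norm_smul, hu, mul_one, norm_zero, zero_add,
        Real.norm_eq_abs, abs_of_pos (by linarith)]
    · rw [hydef, hudef, if_neg hc, smul_smul,
        show c + (r / 2 * ‖c‖⁻¹) • c = (1 + r / 2 * ‖c‖⁻¹) • c by rw [add_smul, one_smul],
        norm_smul, Real.norm_eq_abs, abs_of_pos (by positivity)]
      have hcn : ‖c‖ ≠ 0 := norm_ne_zero_iff.mpr hc
      field_simp
  have h2 : Real.log (Real.exp 1 + (‖c‖ + r / 2)) ≤
      (⨆ x : Metric.ball c r, Real.log (Real.exp 1 + ‖(x : Rn n)‖)) := by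
    have h3 := le_ciSup hbdd (⟨y, hymem⟩ : Metric.ball c r)
    simpa [hynorm, add_assoc] using h3
  have h4 : 1 ≤ Real.log (Real.exp 1 + (‖c‖ + r / 2)) := loge_one_le (by positivity)
  refine ⟨h1, le_trans h4 h2, ?_⟩
  have h5 : L ≤ Real.log 2 + Real.log (Real.exp 1 + (‖c‖ + r / 2)) := by
    have h6 : Real.exp 1 + (‖c‖ + r) ≤ 2 * (Real.exp 1 + (‖c‖ + r / 2)) := by
      linarith [norm_nonneg c]
    calc L ≤ Real.log (2 * (Real.exp 1 + (‖c‖ + r / 2))) :=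
      Real.log_le_log (by positivity) h6
    _ = _ := Real.log_mul (by norm_num) (by positivity)
  have h7 : Real.log 2 ≤ 1 := by
    have := Real.log_le_sub_one_of_pos (x := 2) (by norm_num)
    linarith
  linarith

lemma D2_comp (n : ℕ) (hn : 1 ≤ n) (c : Rn n) (r : ℝ) (hr : 0 < r) :
    (Real.log (Real.exp 1 + 1 / (volume (Metric.ball c r)).toReal) +
        Real.log (Real.exp 1 + (‖c‖ + r))) ≤
      (Real.log (Real.exp 1 + 1 / (volume (Metric.ball (0 : Rn n) 1)).toReal) +
        ((n : ℝ) + 1) * Real.log (Real.exp 1 + 1) + ((n : ℝ) + 2)) *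
        (|Real.log r| + Real.log (Real.exp 1 + ‖c‖)) ∧
    (|Real.log r| + Real.log (Real.exp 1 + ‖c‖)) ≤
      (Real.log (Real.exp 1 + (volume (Metric.ball (0 : Rn n) 1)).toReal) + 2) *
      (Real.log (Real.exp 1 + 1 / (volume (Metric.ball c r)).toReal) +
        Real.log (Real.exp 1 + (‖c‖ + r))) := by
  have he : (1:ℝ) ≤ Real.exp 1 := Real.one_le_exp one_pos.le
  haveI : Nonempty (Fin n) := ⟨⟨0, hn⟩⟩
  set w := (volume (Metric.ball (0 : Rn n) 1)).toReal with hwdef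
  have hw0 : 0 < w := ENNReal.toReal_pos
    (Metric.measure_ball_pos volume _ one_pos).ne' measure_ball_lt_top.ne
  set v := (volume (Metric.ball c r)).toReal with hvdef
  have hVtop : volume (Metric.ball c r) ≠ ⊤ := measure_ball_lt_top.ne
  have hv : v = r ^ n * w := by
    rw [hvdef, Measure.addHaar_ball volume c hr.le, finrank_euclideanSpace_fin,
      ENNReal.toReal_mul, ENNReal.toReal_ofReal (by positivity), hwdef]
  have hv0 : 0 < v := by rw [hv]; positivity
  set L := Real.log (Real.exp 1 + (‖c‖ + r)) with hLdef
  have hL1 : 1 ≤ L := loge_one_le (by positivity)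
  set E := Real.log (Real.exp 1 + 1 / v) with hEdef
  have hE1 : 1 ≤ E := loge_one_le (by positivity)
  have hlc1 : 1 ≤ Real.log (Real.exp 1 + ‖c‖) := loge_one_le (norm_nonneg c)
  have habs : 0 ≤ |Real.log r| := abs_nonneg _
  have hle1 : (1:ℝ) ≤ Real.log (Real.exp 1 + 1) := loge_one_le one_pos.le
  have hn' : (1:ℝ) ≤ (n:ℝ) := by exact_mod_cast hn
  constructor
  · -- upper bound
    have h1 : E ≤ Real.log (Real.exp 1 + 1 / w) +
        (n : ℝ) * (Real.log (Real.exp 1 + 1) + |Real.log r|) := by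
      have h2 : 1 / v = 1 / w * (1 / r) ^ n := by
        rw [hv]
        field_simp
        rw [← mul_pow, mul_one_div_cancel hr.ne', one_pow]
      have h3 : E ≤ Real.log (Real.exp 1 + 1 / w) +
          Real.log (Real.exp 1 + (1 / r) ^ n) := by
        rw [hEdef, h2]
        exact log_e_add_mul_le (by positivity) (by positivity)
      have h4 : Real.log (Real.exp 1 + (1 / r) ^ n) ≤
          (n : ℝ) * Real.log (Real.exp 1 + 1 / r) := log_e_add_pow_le (by positivity) hn
      have h5 : Real.log (Real.exp 1 + 1 / r) ≤ Real.log (Real.exp 1 + 1) + |Real.log r| := by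
        have h6 := log_e_add_le_abs (u := 1 / r) (by positivity)
        have habs2 : |Real.log (1 / r)| = |Real.log r| := by
          rw [one_div, Real.log_inv, abs_neg]
        rw [habs2] at h6
        exact h6
      have h7 : (n : ℝ) * Real.log (Real.exp 1 + 1 / r) ≤
          (n : ℝ) * (Real.log (Real.exp 1 + 1) + |Real.log r|) := by
        apply mul_le_mul_of_nonneg_left h5 (by positivity)
      linarith
    have h8 : L ≤ Real.log (Real.exp 1 + ‖c‖) + Real.log (Real.exp 1 + 1) + |Real.log r| := by
      have h9 : Real.exp 1 + (‖c‖ + r) ≤ (Real.exp 1 + ‖c‖) * (Real.exp 1 + r) := by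
        nlinarith [norm_nonneg c, hr.le]
      have h10 : L ≤ Real.log (Real.exp 1 + ‖c‖) + Real.log (Real.exp 1 + r) := by
        calc L ≤ Real.log ((Real.exp 1 + ‖c‖) * (Real.exp 1 + r)) :=
          Real.log_le_log (by positivity) h9
        _ = _ := Real.log_mul (by positivity) (by positivity)
      have h11 := log_e_add_le_abs (u := r) hr
      linarith
    have hA0 : 0 ≤ Real.log (Real.exp 1 + 1 / w) + ((n:ℝ) + 1) * Real.log (Real.exp 1 + 1) := by
      have := loge_one_le (t := 1 / w) (by positivity)
      nlinarith
    have hD21 : 1 ≤ |Real.log r| + Real.log (Real.exp 1 + ‖c‖) := by linarith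
    nlinarith [mul_nonneg hA0 (by linarith : (0:ℝ) ≤ |Real.log r| + Real.log (Real.exp 1 + ‖c‖) - 1),
      mul_nonneg (by linarith : (0:ℝ) ≤ (n:ℝ) + 1) (by linarith : (0:ℝ) ≤ Real.log (Real.exp 1 + ‖c‖) - 1),
      mul_nonneg (by linarith : (0:ℝ) ≤ (n:ℝ) + 1) habs]
  · -- lower bound
    have hlcL : Real.log (Real.exp 1 + ‖c‖) ≤ L :=
      Real.log_le_log (by positivity) (by linarith)
    have hlw0 : 0 ≤ Real.log (Real.exp 1 + w) := (loge_one_le hw0.le).trans' (by norm_num)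
    rcases le_or_gt 1 r with hr1 | hr1
    · have h12 : |Real.log r| = Real.log r := abs_of_nonneg (Real.log_nonneg hr1)
      have h13 : Real.log r ≤ L := Real.log_le_log hr (by nlinarith [norm_nonneg c])
      nlinarith [mul_nonneg hlw0 (by linarith : (0:ℝ) ≤ E + L)]
    · have h14 : Real.log r < 0 := Real.log_neg hr hr1
      have h12 : |Real.log r| = -Real.log r := abs_of_neg h14
      have h15 : -Real.log r ≤ (n : ℝ) * (-Real.log r) := by nlinarith
      have h16 : (n : ℝ) * (-Real.log r) = Real.log ((1 / r) ^ n) := by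
        rw [Real.log_pow, one_div, Real.log_inv]
      have h17 : (1 / r) ^ n = w * (1 / v) := by
        rw [hv]
        field_simp
        rw [← mul_pow, one_div_mul_cancel hr.ne', one_pow]
      have h18 : Real.log ((1 / r) ^ n) ≤ Real.log (Real.exp 1 + w * (1 / v)) := by
        apply Real.log_le_log (by positivity)
        rw [h17]
        have : (0:ℝ) < Real.exp 1 := Real.exp_pos 1
        nlinarith [mul_pos hw0 (by positivity : (0:ℝ) < 1 / v)]
      have h19 : Real.log (Real.exp 1 + w * (1 / v)) ≤
          Real.log (Real.exp 1 + w) + Real.log (Real.exp 1 + 1 / v) :=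
        log_e_add_mul_le hw0.le (by positivity)
      have h20 : |Real.log r| ≤ Real.log (Real.exp 1 + w) + E := by
        rw [h12, hEdef]
        calc -Real.log r ≤ (n : ℝ) * (-Real.log r) := h15
        _ = Real.log ((1 / r) ^ n) := h16
        _ ≤ _ := le_trans h18 h19
      nlinarith [mul_nonneg hlw0 (by linarith : (0:ℝ) ≤ L - 1),
        mul_nonneg hlw0 (by linarith : (0:ℝ) ≤ E - 1)]

lemma lo_comp {v d d2 β C : ℝ} (hv : 0 ≤ v) (hd : 0 < d) (hd2 : 0 < d2) (hβ : 0 ≤ β)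
    (h : d ≤ β * d2) (hC : 5 * β ≤ C) (hC0 : 0 < C) :
    C⁻¹ * (v / d2) ≤ v / (5 * d) := by
  have h1 : C⁻¹ * (v / d2) = v / (C * d2) := by
    field_simp
  rw [h1, div_le_div_iff₀ (by positivity) (by positivity)]
  have h2 : 5 * d ≤ C * d2 := by nlinarith
  nlinarith [mul_nonneg hv (sub_nonneg.mpr h2)]

lemma up_comp {v d d2 β k C : ℝ} (hv : 0 ≤ v) (hd : 0 < d) (hd2 : 0 < d2) (hβ : 0 ≤ β)
    (hk : 0 ≤ k) (h : d2 ≤ β * d) (hC : k * β ≤ C) :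
    k * (v / d) ≤ C * (v / d2) := by
  rw [mul_div_assoc', mul_div_assoc', div_le_div_iff₀ hd hd2]
  have h1 : k * v * d2 ≤ k * v * (β * d) :=
    mul_le_mul_of_nonneg_left h (mul_nonneg hk hv)
  have h2 : k * v * (β * d) = (k * β) * v * d := by ring
  have h3 : (k * β) * v * d ≤ C * v * d := by
    apply mul_le_mul_of_nonneg_right _ hd.le
    exact mul_le_mul_of_nonneg_right hC hv
  linarith

theorem statement4' (n : ℕ) (hn : 1 ≤ n) :
    ∃ C : ℝ, 1 ≤ C ∧ ∀ (c : Rn n) (r : ℝ), 0 < r →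
      (ENNReal.ofReal (C⁻¹ * ((volume (Metric.ball c r)).toReal /
            (Real.log (Real.exp 1 + 1 / (volume (Metric.ball c r)).toReal) +
              ⨆ x : Metric.ball c r, Real.log (Real.exp 1 + ‖(x : Rn n)‖)))) ≤
          luxPhiNorm n 1 (chi n (Metric.ball c r)) ∧
        luxPhiNorm n 1 (chi n (Metric.ball c r)) ≤
          ENNReal.ofReal (C * ((volume (Metric.ball c r)).toReal /
            (Real.log (Real.exp 1 + 1 / (volume (Metric.ball c r)).toReal) +
              ⨆ x : Metric.ball c r, Real.log (Real.exp 1 + ‖(x : Rn n)‖))))) ∧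
      (ENNReal.ofReal (C⁻¹ * ((volume (Metric.ball c r)).toReal /
            (|Real.log r| + Real.log (Real.exp 1 + ‖c‖)))) ≤
          luxPhiNorm n 1 (chi n (Metric.ball c r)) ∧
        luxPhiNorm n 1 (chi n (Metric.ball c r)) ≤
          ENNReal.ofReal (C * ((volume (Metric.ball c r)).toReal /
            (|Real.log r| + Real.log (Real.exp 1 + ‖c‖))))) := by
  have he : (1:ℝ) ≤ Real.exp 1 := Real.one_le_exp one_pos.le
  haveI : Nonempty (Fin n) := ⟨⟨0, hn⟩⟩
  have hn' : (1:ℝ) ≤ (n : ℝ) := by exact_mod_cast hn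
  set w := (volume (Metric.ball (0 : Rn n) 1)).toReal with hwdef
  have hw0 : 0 < w := ENNReal.toReal_pos
    (Metric.measure_ball_pos volume _ one_pos).ne' measure_ball_lt_top.ne
  set K : ℝ := 10 * 3 ^ n with hKdef
  have hK1 : (1:ℝ) ≤ K := by
    have : (1:ℝ) ≤ 3 ^ n := one_le_pow₀ (by norm_num)
    rw [hKdef]; nlinarith
  set β : ℝ := Real.log (Real.exp 1 + 1 / w) + ((n:ℝ) + 1) * Real.log (Real.exp 1 + 1) +
    ((n:ℝ) + 2) with hβdef
  have hβ0 : 0 ≤ β := by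
    have h1 := loge_one_le (t := 1 / w) (by positivity)
    have h2 := loge_one_le (t := (1:ℝ)) one_pos.le
    rw [hβdef]; nlinarith
  set β' : ℝ := Real.log (Real.exp 1 + w) + 2 with hβ'def
  have hβ'0 : 0 ≤ β' := by
    have := loge_one_le (t := w) hw0.le
    rw [hβ'def]; linarith
  set Cc : ℝ := 10 + K ^ 2 + 5 * β + K ^ 2 * β' with hCdef
  have hK20 : (1:ℝ) ≤ K ^ 2 := by nlinarith
  have hC10 : 10 ≤ Cc := by
    rw [hCdef]; nlinarith [mul_nonneg (by nlinarith : (0:ℝ) ≤ K ^ 2) hβ'0]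
  have hCK2 : K ^ 2 ≤ Cc := by
    rw [hCdef]; nlinarith [mul_nonneg (by nlinarith : (0:ℝ) ≤ K ^ 2) hβ'0]
  have hC5β : 5 * β ≤ Cc := by
    rw [hCdef]; nlinarith [mul_nonneg (by nlinarith : (0:ℝ) ≤ K ^ 2) hβ'0]
  have hCK2β' : K ^ 2 * β' ≤ Cc := by
    rw [hCdef]; nlinarith
  have hC0 : 0 < Cc := by linarith
  refine ⟨Cc, by linarith, ?_⟩
  intro c r hr
  have hv0 : 0 < (volume (Metric.ball c r)).toReal := ENNReal.toReal_pos
    (Metric.measure_ball_pos volume c hr).ne' measure_ball_lt_top.ne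
  obtain ⟨hS1, hS2, hS3⟩ := sup_bounds n hn c r hr
  obtain ⟨hd1, hd2⟩ := D2_comp n hn c r hr
  have hlow := norm_lower n c r hr
  have hup := norm_upper n hn c r hr
  set v := (volume (Metric.ball c r)).toReal with hvdef
  set L := Real.log (Real.exp 1 + (‖c‖ + r)) with hLdef
  set E := Real.log (Real.exp 1 + 1 / v) with hEdef
  set S := ⨆ x : Metric.ball c r, Real.log (Real.exp 1 + ‖(x : Rn n)‖) with hSdef
  rw [← hwdef] at hd1 hd2
  rw [← hβdef] at hd1
  rw [← hβ'def] at hd2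
  have hL1 : 1 ≤ L := loge_one_le (by positivity)
  have hE1 : 1 ≤ E := loge_one_le (by positivity)
  have hlc1 : 1 ≤ Real.log (Real.exp 1 + ‖c‖) := loge_one_le (norm_nonneg c)
  have habs : 0 ≤ |Real.log r| := abs_nonneg _
  have hD0 : 0 < E + L := by linarith
  have hD10 : 0 < E + S := by linarith
  have hD20 : 0 < |Real.log r| + Real.log (Real.exp 1 + ‖c‖) := by linarith
  have hcomp1 : E + L ≤ 2 * (E + S) := by linarith
  have hcomp2 : E + S ≤ 1 * (E + L) := by linarith
  have hupK : luxPhiNorm n 1 (chi n (Metric.ball c r)) ≤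
      ENNReal.ofReal (K ^ 2 * (v / (E + L))) := by
    refine le_trans hup (le_of_eq ?_)
    congr 1
    rw [hKdef]
    ring
  refine ⟨⟨?_, ?_⟩, ?_, ?_⟩
  · refine le_trans (ENNReal.ofReal_le_ofReal ?_) hlow
    exact lo_comp hv0.le hD0 hD10 (by norm_num) hcomp1 (by linarith) hC0
  · refine le_trans hupK (ENNReal.ofReal_le_ofReal ?_)
    exact up_comp hv0.le hD0 hD10 (by norm_num) (by positivity) hcomp2
      (by rw [mul_one]; exact hCK2)
  · refine le_trans (ENNReal.ofReal_le_ofReal ?_) hlow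
    exact lo_comp hv0.le hD0 hD20 hβ0 hd1 hC5β hC0
  · refine le_trans hupK (ENNReal.ofReal_le_ofReal ?_)
    exact up_comp hv0.le hD0 hD20 hβ'0 (by positivity : (0:ℝ) ≤ K ^ 2) hd2 hCK2β'

theorem statement4 (n : ℕ) (hn : 1 ≤ n) :
    ∃ C : ℝ, 1 ≤ C ∧ ∀ (c : Rn n) (r : ℝ), 0 < r →
      (ENNReal.ofReal (C⁻¹ * ((volume (Metric.ball c r)).toReal /
            (Real.log (Real.exp 1 + 1 / (volume (Metric.ball c r)).toReal) +
              ⨆ x : Metric.ball c r, Real.log (Real.exp 1 + ‖(x : Rn n)‖)))) ≤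
          luxPhiNorm n 1 (chi n (Metric.ball c r)) ∧
        luxPhiNorm n 1 (chi n (Metric.ball c r)) ≤
          ENNReal.ofReal (C * ((volume (Metric.ball c r)).toReal /
            (Real.log (Real.exp 1 + 1 / (volume (Metric.ball c r)).toReal) +
              ⨆ x : Metric.ball c r, Real.log (Real.exp 1 + ‖(x : Rn n)‖))))) ∧
      (ENNReal.ofReal (C⁻¹ * ((volume (Metric.ball c r)).toReal /
            (|Real.log r| + Real.log (Real.exp 1 + ‖c‖)))) ≤
          luxPhiNorm n 1 (chi n (Metric.ball c r)) ∧
        luxPhiNorm n 1 (chi n (Metric.ball c r)) ≤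
          ENNReal.ofReal (C * ((volume (Metric.ball c r)).toReal /
            (|Real.log r| + Real.log (Real.exp 1 + ‖c‖))))) := statement4' n hn
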